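/- arXiv:2212.03320 — 2 statements merged into one kernel-verified Lean document; each statement's English description precedes it below -/
import Mathlib

section
/- Let U : ℝⁿ → ℝ be convex and continuously differentiable with a minimizer s*. If s satisfies Nesterov's ODE s''(t) + (3/t) s'(t) + ∇U(s(t)) = 0 for t > 0, then the function E(t) = t²(U(s(t)) − U(s*)) + 2|s(t) + (t/2) s'(t) − s*|² is nonincreasing. -/
open InnerProductSpace

local notation "⟪" x ", " y "⟫" => @inner ℝ _ _ x y

-- convex gradient inequality
lemma grad_ineq {n : ℕ} (U : EuclideanSpace ℝ (Fin n) → ℝ)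
    (hU : Differentiable ℝ U) (hconv : ConvexOn ℝ Set.univ U)
    (x y : EuclideanSpace ℝ (Fin n)) :
    ⟪gradient U x, y - x⟫ ≤ U y - U x := by
  set d : ℝ := ⟪gradient U x, y - x⟫ with hd
  have hline : HasDerivAt (fun θ : ℝ => x + θ • (y - x)) (y - x) (0 : ℝ) := by
    simpa using ((hasDerivAt_id (0:ℝ)).smul_const (y - x)).const_add x
  have hfd : HasFDerivAt U (toDual ℝ _ (gradient U x)) x :=
    hasGradientAt_iff_hasFDerivAt.mp (hU x).hasGradientAt
  have hfd0 : HasFDerivAt U (toDual ℝ _ (gradient U x)) ((fun θ : ℝ => x + θ • (y - x)) 0) := by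
    simpa using hfd
  have hphi : HasDerivAt (fun θ : ℝ => U (x + θ • (y - x))) d 0 := by
    have := hfd0.comp_hasDerivAt 0 hline
    rw [toDual_apply_apply] at this; exact this
  have htend : Filter.Tendsto (slope (fun θ : ℝ => U (x + θ • (y - x))) 0)
      (nhdsWithin 0 (Set.Ioi 0)) (nhds d) :=
    (hasDerivAt_iff_tendsto_slope.mp hphi).mono_left
      (nhdsWithin_mono _ (fun z hz => ne_of_gt hz))
  refine le_of_tendsto htend ?_
  filter_upwards [self_mem_nhdsWithin, Ioo_mem_nhdsGT_of_mem (by norm_num : (0:ℝ) ∈ Set.Ico 0 1)]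
    with θ hθ hθ1
  have hθ0 : (0:ℝ) < θ := hθ
  have hconvineq := hconv.2 (Set.mem_univ x) (Set.mem_univ y)
    (by linarith [hθ1.2] : (0:ℝ) ≤ 1 - θ) (le_of_lt hθ0) (by ring)
  have hpt : x + θ • (y - x) = (1 - θ) • x + θ • y := by module
  rw [slope_def_field, sub_zero, div_le_iff₀ hθ0, hpt]
  simp only [zero_smul, add_zero, smul_eq_mul] at hconvineq ⊢
  nlinarith [hconvineq]

theorem stmt_5 (n : ℕ) (U : EuclideanSpace ℝ (Fin n) → ℝ)
    (hU : ContDiff ℝ 1 U) (hUconv : ConvexOn ℝ Set.univ U)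
    (sstar : EuclideanSpace ℝ (Fin n)) (hmin : ∀ x, U sstar ≤ U x)
    (s : ℝ → EuclideanSpace ℝ (Fin n))
    (hs : ∀ t ∈ Set.Ioi (0 : ℝ), DifferentiableAt ℝ s t)
    (hs' : ∀ t ∈ Set.Ioi (0 : ℝ), DifferentiableAt ℝ (deriv s) t)
    (hode : ∀ t ∈ Set.Ioi (0 : ℝ),
      deriv (deriv s) t + (3 / t) • deriv s t + gradient U (s t) = 0) :
    AntitoneOn (fun t => t ^ 2 * (U (s t) - U sstar)
      + 2 * ‖s t + (t / 2) • deriv s t - sstar‖ ^ 2) (Set.Ioi 0) := by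
  have hUd : Differentiable ℝ U := hU.differentiable one_ne_zero
  have key : ∀ t ∈ Set.Ioi (0:ℝ),
      HasDerivAt (fun t => t ^ 2 * (U (s t) - U sstar)
        + 2 * ‖s t + (t / 2) • deriv s t - sstar‖ ^ 2)
        (2 * t * ((U (s t) - U sstar) - ⟪gradient U (s t), s t - sstar⟫)) t := by
    intro t ht
    have ht0 : (0:ℝ) < t := ht
    have htne : t ≠ 0 := ne_of_gt ht0
    have hds : HasDerivAt s (deriv s t) t := (hs t ht).hasDerivAt
    have hds2 : HasDerivAt (deriv s) (deriv (deriv s) t) t := (hs' t ht).hasDerivAt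
    have hs2eq : deriv (deriv s) t = -((3/t) • deriv s t) - gradient U (s t) := by
      have h := hode t ht
      linear_combination (norm := module) h
    have hw : HasDerivAt (fun τ => s τ + (τ / 2) • deriv s τ - sstar)
        (-((t/2) • gradient U (s t))) t := by
      have h1 : HasDerivAt (fun τ => s τ + (τ / 2) • deriv s τ - sstar)
          (deriv s t + ((t/2) • deriv (deriv s) t + ((1:ℝ)/2) • deriv s t)) t := by
        have := ((hds.add (((hasDerivAt_id t).div_const 2).smul hds2)).sub_const sstar)
        simpa [id_eq] using this
      convert h1 using 1
      rw [hs2eq]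
      match_scalars <;> field_simp <;> ring
    have hfd : HasFDerivAt U (toDual ℝ _ (gradient U (s t))) (s t) :=
      hasGradientAt_iff_hasFDerivAt.mp (hUd (s t)).hasGradientAt
    have hUc : HasDerivAt (fun τ => U (s τ)) ⟪gradient U (s t), deriv s t⟫ t := by
      have := hfd.comp_hasDerivAt t hds
      rw [toDual_apply_apply] at this; exact this
    have hE := (((hasDerivAt_pow 2 t).mul (hUc.sub_const (U sstar))).add
      (hw.norm_sq.const_mul 2))
    convert hE using 1
    case e'_4 => rfl
    case e'_5 => rfl
    case e'_8 => rfl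
    have hwval : ⟪s t + (t/2) • deriv s t - sstar, -((t/2) • gradient U (s t))⟫
        = -(t/2) * ((⟪gradient U (s t), s t⟫ - ⟪gradient U (s t), sstar⟫)
            + (t/2) * ⟪gradient U (s t), deriv s t⟫) := by
      rw [inner_neg_right, inner_smul_right, inner_sub_left, inner_add_left,
        inner_smul_left, real_inner_comm (s t), real_inner_comm (deriv s t),
        real_inner_comm sstar]
      simp only [conj_trivial]
      ring
    rw [hwval, inner_sub_right]
    push_cast
    ring
  have hdiff : ∀ t ∈ Set.Ioi (0:ℝ), DifferentiableAt ℝ (fun t => t ^ 2 * (U (s t) - U sstar)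
        + 2 * ‖s t + (t / 2) • deriv s t - sstar‖ ^ 2) t :=
    fun t ht => (key t ht).differentiableAt
  apply antitoneOn_of_deriv_nonpos (convex_Ioi 0)
  · exact fun t ht => (hdiff t ht).continuousAt.continuousWithinAt
  · rw [interior_Ioi]; exact fun t ht => (hdiff t ht).differentiableWithinAt
  · intro t ht
    rw [interior_Ioi] at ht
    rw [(key t ht).deriv]
    have hineq := grad_ineq U hUd hUconv (s t) sstar
    have h2 : ⟪gradient U (s t), sstar - s t⟫ = -⟪gradient U (s t), s t - sstar⟫ := by
      rw [← inner_neg_right]; congr 1; abel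
    rw [h2] at hineq
    have ht0 : (0:ℝ) < t := ht
    nlinarith [hineq]
end

section
/- Let U : ℝⁿ → ℝ be convex and continuously differentiable with minimum value U* attained at s*. If s solves Nesterov's ODE s'' + (3/t)s' + ∇U(s) = 0 on (0,∞), then for all t > 0, U(s(t)) − U* ≤ 2|s(t₀) + (t₀/2)s'(t₀) − s*|²/t² + (t₀²/t²)(U(s(t₀)) − U*) for any 0 < t₀ ≤ t; in particular U(s(t)) − U* = O(1/t²). -/
open Set

/-- Gradient inequality for convex differentiable functions. -/
lemma grad_ineq_aux {n : ℕ} (U : EuclideanSpace ℝ (Fin n) → ℝ)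
    (hU : Differentiable ℝ U) (hc : ConvexOn ℝ Set.univ U)
    (x y : EuclideanSpace ℝ (Fin n)) :
    (inner ℝ (gradient U x) (y - x) : ℝ) ≤ U y - U x := by
  set g : ℝ → ℝ := fun θ => U (x + θ • (y - x)) with hg
  have hline : ∀ θ : ℝ, HasDerivAt (fun θ : ℝ => x + θ • (y - x)) (y - x) θ := by
    intro θ
    simpa using ((hasDerivAt_id θ).smul_const (y - x)).const_add x
  have hgd : HasDerivAt g (inner ℝ (gradient U x) (y - x) : ℝ) 0 := by
    have hG : HasFDerivAt U (InnerProductSpace.toDual ℝ _ (gradient U x)) x :=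
      (hU x).hasGradientAt.hasFDerivAt
    have hG' : HasFDerivAt U (InnerProductSpace.toDual ℝ _ (gradient U x))
        (x + (0 : ℝ) • (y - x)) := by simpa using hG
    have := hG'.comp_hasDerivAt (0 : ℝ) (hline 0)
    simpa [InnerProductSpace.toDual_apply_apply, hg, Function.comp_def] using this
  have hconv : ConvexOn ℝ Set.univ g := by
    have := hc.comp_affineMap (AffineMap.lineMap x y : ℝ →ᵃ[ℝ] EuclideanSpace ℝ (Fin n))
    have heq : g = U ∘ (AffineMap.lineMap x y : ℝ →ᵃ[ℝ] EuclideanSpace ℝ (Fin n)) := by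
      funext θ
      simp [g, AffineMap.lineMap_apply, add_comm]
    rw [heq]
    simpa using this
  have hs := hconv.le_slope_of_hasDerivAt (x := 0) (y := 1)
    (Set.mem_univ _) (Set.mem_univ _) one_pos hgd
  have : slope g 0 1 = U y - U x := by
    simp [slope, g]
  linarith [hs.trans_eq this]

theorem stmt_6 (n : ℕ) (U : EuclideanSpace ℝ (Fin n) → ℝ)
    (hU : ContDiff ℝ 1 U) (hUconv : ConvexOn ℝ Set.univ U)
    (sstar : EuclideanSpace ℝ (Fin n)) (Ustar : ℝ)
    (hUstar : U sstar = Ustar) (hmin : ∀ x, Ustar ≤ U x)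
    (s : ℝ → EuclideanSpace ℝ (Fin n))
    (hs : ∀ t ∈ Set.Ioi (0 : ℝ), DifferentiableAt ℝ s t)
    (hs' : ∀ t ∈ Set.Ioi (0 : ℝ), DifferentiableAt ℝ (deriv s) t)
    (hode : ∀ t ∈ Set.Ioi (0 : ℝ),
      deriv (deriv s) t + (3 / t) • deriv s t + gradient U (s t) = 0) :
    ∀ t > (0 : ℝ), ∀ t₀, 0 < t₀ → t₀ ≤ t →
      U (s t) - Ustar ≤ 2 * ‖s t₀ + (t₀ / 2) • deriv s t₀ - sstar‖ ^ 2 / t ^ 2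
        + (t₀ ^ 2 / t ^ 2) * (U (s t₀) - Ustar) := by
  have hUd : Differentiable ℝ U := hU.differentiable one_ne_zero
  set v : ℝ → EuclideanSpace ℝ (Fin n) :=
    fun τ => s τ + (τ / 2) • deriv s τ - sstar with hv
  set E : ℝ → ℝ := fun τ => τ ^ 2 * (U (s τ) - Ustar) + 2 * ‖v τ‖ ^ 2 with hE
  -- derivative of E at any point of (0,∞)
  have key : ∀ τ ∈ Set.Ioi (0 : ℝ),
      HasDerivAt E (2 * τ * ((U (s τ) - Ustar)
        - inner ℝ (gradient U (s τ)) (s τ - sstar))) τ := by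
    intro τ hτ
    have hτ0 : τ ≠ 0 := ne_of_gt hτ
    set a := deriv s τ with ha
    set b := deriv (deriv s) τ with hb
    set g := gradient U (s τ) with hgdef
    have hsa : HasDerivAt s a τ := (hs τ hτ).hasDerivAt
    have hsb : HasDerivAt (deriv s) b τ := (hs' τ hτ).hasDerivAt
    have hbeq : b = -((3 / τ) • a) - g := by
      have h := hode τ hτ
      rw [ha, hb, hgdef]
      linear_combination (norm := module) h
    -- derivative of U ∘ s
    have hUs : HasDerivAt (fun τ => U (s τ)) (inner ℝ g a : ℝ) τ := by
      have hG : HasFDerivAt U (InnerProductSpace.toDual ℝ _ g) (s τ) :=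
        (hUd (s τ)).hasGradientAt.hasFDerivAt
      simpa [InnerProductSpace.toDual_apply_apply, Function.comp_def] using hG.comp_hasDerivAt τ hsa
    -- derivative of v
    have hsmul : HasDerivAt (fun τ : ℝ => (τ / 2) • deriv s τ)
        ((τ / 2) • b + (2 : ℝ)⁻¹ • a) τ := by
      simpa [Pi.smul_def'] using ((hasDerivAt_id τ).div_const 2).smul hsb
    have hvd : HasDerivAt v (a + ((τ / 2) • b + (2 : ℝ)⁻¹ • a)) τ := by
      simpa [hv] using (hsa.add hsmul).sub_const sstar
    have hv' : a + ((τ / 2) • b + (2 : ℝ)⁻¹ • a) = -((τ / 2) • g) := by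
      rw [hbeq]
      match_scalars <;> (field_simp; try ring)
    rw [hv'] at hvd
    -- derivative of ‖v‖²
    have hnorm : HasDerivAt (fun τ => ‖v τ‖ ^ 2)
        ((inner ℝ (v τ) (-((τ / 2) • g)) : ℝ) + inner ℝ (-((τ / 2) • g)) (v τ)) τ := by
      have := hvd.inner ℝ hvd
      have heq : (fun τ => (inner ℝ (v τ) (v τ) : ℝ)) = fun τ => ‖v τ‖ ^ 2 := by
        funext x; rw [real_inner_self_eq_norm_sq]
      rwa [heq] at this
    have hE1 : HasDerivAt (fun τ => τ ^ 2 * (U (s τ) - Ustar))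
        ((2 * τ) * (U (s τ) - Ustar) + τ ^ 2 * (inner ℝ g a : ℝ)) τ := by
      have := (hasDerivAt_pow 2 τ).mul (hUs.sub_const Ustar)
      simpa [pow_one, Pi.mul_def] using this
    have hEd := hE1.add (hnorm.const_mul 2)
    refine hEd.congr_deriv ?_
    -- algebraic identity for the derivative value
    have h1 : (inner ℝ (v τ) (-((τ / 2) • g)) : ℝ)
        = -(τ / 2) * ((inner ℝ (s τ - sstar) g : ℝ) + (τ / 2) * (inner ℝ a g : ℝ)) := by
      have : v τ = (s τ - sstar) + (τ / 2) • a := by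
        rw [hv]; module
      rw [this, inner_neg_right, inner_smul_right, inner_add_left, inner_smul_left]
      simp only [starRingEnd_apply, star_trivial]
      ring
    have h2 : (inner ℝ (-((τ / 2) • g)) (v τ) : ℝ) = (inner ℝ (v τ) (-((τ / 2) • g)) : ℝ) :=
      real_inner_comm _ _
    have h3 : (inner ℝ a g : ℝ) = (inner ℝ g a : ℝ) := real_inner_comm _ _
    have h4 : (inner ℝ g (s τ - sstar) : ℝ) = (inner ℝ (s τ - sstar) g : ℝ) :=
      real_inner_comm _ _
    rw [h2, h1, h4, h3]
    ring
  -- the derivative is nonpositive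
  have keyle : ∀ τ ∈ Set.Ioi (0 : ℝ),
      2 * τ * ((U (s τ) - Ustar) - inner ℝ (gradient U (s τ)) (s τ - sstar)) ≤ 0 := by
    intro τ hτ
    have hg := grad_ineq_aux U hUd hUconv (s τ) sstar
    have hinner : (inner ℝ (gradient U (s τ)) (sstar - s τ) : ℝ)
        = -(inner ℝ (gradient U (s τ)) (s τ - sstar) : ℝ) := by
      rw [← inner_neg_right]; congr 1; abel
    rw [hinner, hUstar] at hg
    have hτ0 : (0 : ℝ) < τ := hτ
    nlinarith
  intro t ht t₀ ht₀ ht₀t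
  -- E is antitone on [t₀, t]
  have hmono : E t ≤ E t₀ := by
    have hsub : Set.Icc t₀ t ⊆ Set.Ioi (0 : ℝ) := fun x hx =>
      lt_of_lt_of_le ht₀ hx.1
    have hanti : AntitoneOn E (Set.Icc t₀ t) := by
      apply antitoneOn_of_deriv_nonpos (convex_Icc t₀ t)
      · intro x hx
        exact ((key x (hsub hx)).differentiableAt).continuousAt.continuousWithinAt
      · intro x hx
        rw [interior_Icc] at hx
        exact ((key x (hsub (Set.mem_Icc_of_Ioo hx))).differentiableAt).differentiableWithinAt
      · intro x hx
        rw [interior_Icc] at hx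
        have hx' := hsub (Set.mem_Icc_of_Ioo hx)
        rw [(key x hx').deriv]
        exact keyle x hx'
    exact hanti (Set.left_mem_Icc.mpr ht₀t) (Set.right_mem_Icc.mpr ht₀t) ht₀t
  -- conclude
  have ht2 : (0 : ℝ) < t ^ 2 := by positivity
  have hEt : t ^ 2 * (U (s t) - Ustar) ≤ E t := by
    have h0 : (0 : ℝ) ≤ 2 * ‖v t‖ ^ 2 := by positivity
    simp only [hE]; linarith
  have hfinal : t ^ 2 * (U (s t) - Ustar) ≤ E t₀ := hEt.trans hmono
  calc U (s t) - Ustar ≤ E t₀ / t ^ 2 := by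
        rw [le_div_iff₀ ht2]; linarith
    _ = 2 * ‖s t₀ + (t₀ / 2) • deriv s t₀ - sstar‖ ^ 2 / t ^ 2
        + (t₀ ^ 2 / t ^ 2) * (U (s t₀) - Ustar) := by
        simp only [hE, hv]
        field_simp
        ring
end
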